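/- For k-vectors λ and ℓ-vectors η in the exterior algebra of ℝ^m, if at least one of λ, η is a simple (decomposable) multivector, then |λ ∧ η|_{k+ℓ} ≤ |λ|_k |η|_ℓ. -/

import Mathlib

open Finset

/-- Coordinates of a `k`-vector in `Λ_k(ℝ^m)` with respect to the standard basis
`{e_α : α ∈ I(k,m)}`, indexed by `k`-element subsets of `Fin m`. -/
abbrev MultiVec (m k : ℕ) : Type := {s : Finset (Fin m) // s.card = k} → ℝ

noncomputable section

/-- Sign of the shuffle permutation sorting the concatenation of (sorted) `s`
followed by (sorted) `t`: `(-1)` to the number of inversions. -/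
def shuffleSign {m : ℕ} (s t : Finset (Fin m)) : ℝ :=
  (-1 : ℝ) ^ (∑ i ∈ s, (t.filter (fun j => j < i)).card)

/-- Identity cast between spaces of multivectors of equal degree. -/
def MultiVec.cast {m k l : ℕ} (h : k = l) (a : MultiVec m k) : MultiVec m l :=
  fun t => a ⟨t.1, t.2.trans h.symm⟩

/-- Exterior (wedge) product of multivectors, in coordinates. -/
def wedge {m k l : ℕ} (a : MultiVec m k) (b : MultiVec m l) : MultiVec m (k + l) :=
  fun t => ∑ s ∈ ((t : Finset (Fin m)).powersetCard k).attach,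
    shuffleSign s.1 (t.1 \ s.1) *
      a ⟨s.1, (Finset.mem_powersetCard.mp s.2).2⟩ *
      b ⟨t.1 \ s.1, by
        have h := Finset.mem_powersetCard.mp s.2
        rw [Finset.card_sdiff, Finset.inter_eq_left.mpr h.1, t.2, h.2]; omega⟩

/-- The Hodge star operator `* : Λ_k(ℝ^m) → Λ_{m−k}(ℝ^m)`, defined on the standard
basis by `*(e_α) = ±e_{αᶜ}` with the sign of the corresponding permutation of
`(1,…,m)` (so that positive permutations get sign `+1`). -/
def hodge {m k : ℕ} (hk : k ≤ m) (a : MultiVec m k) : MultiVec m (m - k) :=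
  fun t => shuffleSign t.1ᶜ t.1 * a ⟨t.1ᶜ, by
    rw [Finset.card_compl, Fintype.card_fin, t.2]; omega⟩

/-- A vector of `ℝ^m` regarded as a `1`-vector. -/
def vec1 {m : ℕ} (v : Fin m → ℝ) : MultiVec m 1 := fun t => ∑ i ∈ t.1, v i

/-- Euclidean inner product on `ℝ^m`. -/
def dotv {m : ℕ} (a b : Fin m → ℝ) : ℝ := ∑ i, a i * b i

/-- Norm of a `k`-vector induced by the inner product
`⟨λ₁∧⋯∧λ_k, μ₁∧⋯∧μ_k⟩ = det(⟨λ_i,μ_j⟩)`, which in the standard orthonormal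
coordinates is `(Σ_α λ_α²)^{1/2}`. -/
def mnorm {m k : ℕ} (a : MultiVec m k) : ℝ := Real.sqrt (∑ t, (a t) ^ 2)

/-- Iterated wedge `u₁ ∧ ⋯ ∧ u_k` of a family of vectors. -/
def wedgeFamily {m : ℕ} : (k : ℕ) → (Fin k → (Fin m → ℝ)) → MultiVec m k
  | 0, _ => fun _ => 1
  | (k + 1), u =>
      MultiVec.cast (Nat.add_comm 1 k)
        (wedge (vec1 (u 0)) (wedgeFamily k (fun i => u i.succ)))

/-- A multivector is simple (decomposable) if it is a wedge of vectors. -/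
def IsSimple {m k : ℕ} (a : MultiVec m k) : Prop :=
  ∃ u : Fin k → (Fin m → ℝ), a = wedgeFamily k u

end

noncomputable section
namespace Aux

variable {m : ℕ}

lemma ss_sq (s t : Finset (Fin m)) : shuffleSign s t * shuffleSign s t = 1 := by
  unfold shuffleSign
  rw [← pow_add, ← two_mul, pow_mul]
  norm_num

lemma ss_union_right (s t r : Finset (Fin m)) (h : Disjoint t r) :
    shuffleSign s (t ∪ r) = shuffleSign s t * shuffleSign s r := by
  unfold shuffleSign
  rw [← pow_add, ← Finset.sum_add_distrib]
  congr 1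
  apply Finset.sum_congr rfl
  intro i _
  rw [Finset.filter_union, Finset.card_union_of_disjoint]
  exact Finset.disjoint_filter_filter h

lemma ss_union_left (s t r : Finset (Fin m)) (h : Disjoint s t) :
    shuffleSign (s ∪ t) r = shuffleSign s r * shuffleSign t r := by
  unfold shuffleSign
  rw [← pow_add, Finset.sum_union h]

lemma ss_insert_right (s : Finset (Fin m)) {j : Fin m} {r : Finset (Fin m)} (h : j ∉ r) :
    shuffleSign s (insert j r) = shuffleSign s {j} * shuffleSign s r := by
  rw [Finset.insert_eq, ss_union_right _ _ _ (by simpa using h)]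

lemma ss_insert_left {i : Fin m} {s : Finset (Fin m)} (h : i ∉ s) (r : Finset (Fin m)) :
    shuffleSign (insert i s) r = shuffleSign {i} r * shuffleSign s r := by
  rw [Finset.insert_eq, ss_union_left _ _ _ (by simpa using h)]

lemma ss_empty_left (t : Finset (Fin m)) : shuffleSign ∅ t = 1 := by
  simp [shuffleSign]

lemma ss_empty_right (s : Finset (Fin m)) : shuffleSign s ∅ = 1 := by
  simp [shuffleSign]

lemma ss_single (i j : Fin m) : shuffleSign {i} {j} = if j < i then -1 else 1 := by
  unfold shuffleSign
  rw [Finset.sum_singleton]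
  by_cases h : j < i <;> simp [Finset.filter_singleton, h]

lemma ss_single_mul {i j : Fin m} (h : i ≠ j) :
    shuffleSign {i} {j} * shuffleSign {j} {i} = -1 := by
  rw [ss_single, ss_single]
  rcases lt_trichotomy i j with h1 | h1 | h1
  · simp [h1, not_lt.mpr h1.le]
  · exact absurd h1 h
  · simp [h1, not_lt.mpr h1.le]

lemma ss_comm (s t : Finset (Fin m)) (h : Disjoint s t) :
    shuffleSign s t * shuffleSign t s = (-1 : ℝ) ^ (s.card * t.card) := by
  unfold shuffleSign
  rw [← pow_add]
  congr 1
  have key : ∀ x ∈ s, ∀ y ∈ t, ((if y < x then 1 else 0) + if x < y then 1 else 0) = 1 := by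
    intro x hx y hy
    have : x ≠ y := fun hxy => (Finset.disjoint_left.mp h hx) (hxy ▸ hy)
    rcases lt_trichotomy x y with h1 | h1 | h1
    · simp [h1, not_lt.mpr h1.le]
    · exact absurd h1 this
    · simp [h1, not_lt.mpr h1.le]
  calc ∑ i ∈ s, (t.filter (fun j => j < i)).card + ∑ j ∈ t, (s.filter (fun i => i < j)).card
      = ∑ i ∈ s, ∑ j ∈ t, (if j < i then 1 else 0) + ∑ j ∈ t, ∑ i ∈ s, (if i < j then 1 else 0) := by
        congr 1 <;> refine Finset.sum_congr rfl fun x _ => ?_ <;>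
          rw [Finset.card_filter]
    _ = ∑ i ∈ s, ∑ j ∈ t, ((if j < i then 1 else 0) + if i < j then 1 else 0) := by
        rw [Finset.sum_comm (s := t)]
        rw [← Finset.sum_add_distrib]
        congr 1
        ext i
        rw [← Finset.sum_add_distrib]
    _ = s.card * t.card := by
        rw [Finset.sum_congr rfl fun x hx => Finset.sum_congr rfl fun y hy => key x hx y hy]
        simp [mul_comm]

/-- raw wedge on coordinate functions -/
def W (f g : Finset (Fin m) → ℝ) : Finset (Fin m) → ℝ :=
  fun t => ∑ s ∈ t.powerset, shuffleSign s (t \ s) * f s * g (t \ s)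

/-- wedge with a single vector -/
def w1 (v : Fin m → ℝ) (g : Finset (Fin m) → ℝ) : Finset (Fin m) → ℝ :=
  fun t => ∑ i ∈ t, shuffleSign {i} (t.erase i) * v i * g (t.erase i)

/-- interior product with a single vector -/
def c1 (v : Fin m → ℝ) (g : Finset (Fin m) → ℝ) : Finset (Fin m) → ℝ :=
  fun r => ∑ i ∈ rᶜ, shuffleSign {i} r * v i * g (insert i r)

def Nsq (f : Finset (Fin m) → ℝ) : ℝ := ∑ t, (f t) ^ 2

def dotp (f g : Finset (Fin m) → ℝ) : ℝ := ∑ t, f t * g t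

def ext {k : ℕ} (a : MultiVec m k) : Finset (Fin m) → ℝ :=
  fun s => if h : s.card = k then a ⟨s, h⟩ else 0

lemma ext_eq_zero {k : ℕ} (a : MultiVec m k) {s : Finset (Fin m)} (h : s.card ≠ k) :
    ext a s = 0 := dif_neg h

lemma ext_eq {k : ℕ} (a : MultiVec m k) {s : Finset (Fin m)} (h : s.card = k) :
    ext a s = a ⟨s, h⟩ := dif_pos h

lemma ext_wedge {k l : ℕ} (a : MultiVec m k) (b : MultiVec m l) :
    ext (wedge a b) = W (ext a) (ext b) := by
  funext t
  by_cases ht : t.card = k + l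
  · rw [ext_eq _ ht]
    show wedge a b ⟨t, ht⟩ = _
    unfold wedge W
    calc ∑ s ∈ ((⟨t, ht⟩ : {x : Finset (Fin m) // x.card = k + l}).1.powersetCard k).attach,
          shuffleSign s.1 ((⟨t, ht⟩ : {x : Finset (Fin m) // x.card = k + l}).1 \ s.1) *
            a ⟨s.1, (Finset.mem_powersetCard.mp s.2).2⟩ *
            b ⟨(⟨t, ht⟩ : {x : Finset (Fin m) // x.card = k + l}).1 \ s.1, by
              have h := Finset.mem_powersetCard.mp s.2
              rw [Finset.card_sdiff, Finset.inter_eq_left.mpr h.1, ht, h.2]; omega⟩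
        = ∑ s ∈ (t.powersetCard k).attach,
            shuffleSign s.1 (t \ s.1) * ext a s.1 * ext b (t \ s.1) := by
          refine Finset.sum_congr rfl fun s _ => ?_
          rw [ext_eq a (Finset.mem_powersetCard.mp s.2).2, ext_eq b (by
            have h := Finset.mem_powersetCard.mp s.2
            rw [Finset.card_sdiff, Finset.inter_eq_left.mpr h.1, ht, h.2]; omega)]
      _ = ∑ s ∈ t.powersetCard k,
            shuffleSign s (t \ s) * ext a s * ext b (t \ s) :=
          Finset.sum_attach (t.powersetCard k) (fun s => shuffleSign s (t \ s) * ext a s * ext b (t \ s))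
      _ = ∑ s ∈ t.powerset, shuffleSign s (t \ s) * ext a s * ext b (t \ s) := by
          rw [Finset.powersetCard_eq_filter]
          refine Finset.sum_filter_of_ne fun s hs hne => ?_
          by_contra h
          exact hne (by rw [ext_eq_zero a h, mul_zero, zero_mul])
  · rw [ext_eq_zero _ ht]
    unfold W
    refine (Finset.sum_eq_zero fun s hs => ?_).symm
    by_cases ha : s.card = k
    · by_cases hb : (t \ s).card = l
      · exfalso
        apply ht
        rw [← ha, ← hb, Finset.card_sdiff, Finset.inter_eq_left.mpr (Finset.mem_powerset.mp hs)]
        have := Finset.card_le_card (Finset.mem_powerset.mp hs)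
        omega
      · rw [ext_eq_zero _ hb, mul_zero]
    · rw [ext_eq_zero _ ha, mul_zero, zero_mul]

lemma W_single (v : Fin m → ℝ) (g : Finset (Fin m) → ℝ) :
    W (ext (vec1 v)) g = w1 v g := by
  funext t
  unfold W w1
  have h1 : ∑ s ∈ t.powerset, shuffleSign s (t \ s) * ext (vec1 v) s * g (t \ s)
      = ∑ s ∈ t.powersetCard 1, shuffleSign s (t \ s) * ext (vec1 v) s * g (t \ s) := by
    rw [Finset.powersetCard_eq_filter]
    refine (Finset.sum_filter_of_ne fun s hs hne => ?_).symm
    by_contra h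
    exact hne (by rw [ext_eq_zero _ h, mul_zero, zero_mul])
  rw [h1, Finset.powersetCard_one, Finset.sum_map]
  refine Finset.sum_congr rfl fun i hi => ?_
  have h2 : ext (vec1 v) {i} = v i := by
    rw [ext_eq (vec1 v) (Finset.card_singleton i)]
    show ∑ j ∈ {i}, v j = v i
    exact Finset.sum_singleton v i
  show shuffleSign {i} (t \ {i}) * ext (vec1 v) {i} * g (t \ {i}) = _
  rw [h2, ← Finset.erase_eq]

lemma sum_powerset_sum_mem (t : Finset (Fin m)) (F : Finset (Fin m) → Fin m → ℝ) :
    ∑ s ∈ t.powerset, ∑ i ∈ s, F s i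
      = ∑ i ∈ t, ∑ s ∈ (t.erase i).powerset, F (insert i s) i := by
  rw [Finset.sum_sigma', Finset.sum_sigma']
  refine Finset.sum_nbij' (fun x => ⟨x.2, x.1.erase x.2⟩) (fun y => ⟨insert y.1 y.2, y.1⟩)
    ?_ ?_ ?_ ?_ ?_
  · rintro ⟨s, i⟩ hx
    rw [Finset.mem_sigma] at hx ⊢
    obtain ⟨hs, hi⟩ := hx
    rw [Finset.mem_powerset] at hs ⊢
    exact ⟨hs hi, Finset.erase_subset_erase _ hs⟩
  · rintro ⟨i, s⟩ hy
    rw [Finset.mem_sigma] at hy ⊢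
    obtain ⟨hi, hs⟩ := hy
    rw [Finset.mem_powerset] at hs ⊢
    constructor
    · exact Finset.insert_subset hi (hs.trans (Finset.erase_subset _ _))
    · exact Finset.mem_insert_self _ _
  · rintro ⟨s, i⟩ hx
    rw [Finset.mem_sigma] at hx
    exact Sigma.ext (Finset.insert_erase hx.2) HEq.rfl
  · rintro ⟨i, s⟩ hy
    rw [Finset.mem_sigma] at hy
    have hi : i ∉ s := fun h =>
      (Finset.mem_erase.mp (Finset.mem_powerset.mp hy.2 h)).1 rfl
    exact Sigma.ext rfl (heq_of_eq (Finset.erase_insert hi))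
  · rintro ⟨s, i⟩ hx
    rw [Finset.mem_sigma] at hx
    show F s i = F (insert i (s.erase i)) i
    rw [Finset.insert_erase hx.2]

lemma sum_univ_sum_mem (F : Finset (Fin m) → Fin m → ℝ) :
    ∑ t : Finset (Fin m), ∑ i ∈ t, F t i
      = ∑ r : Finset (Fin m), ∑ i ∈ rᶜ, F (insert i r) i := by
  rw [Finset.sum_sigma', Finset.sum_sigma']
  refine Finset.sum_nbij' (fun x => ⟨x.1.erase x.2, x.2⟩) (fun y => ⟨insert y.2 y.1, y.2⟩)
    ?_ ?_ ?_ ?_ ?_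
  · rintro ⟨t, i⟩ hx
    rw [Finset.mem_sigma] at hx ⊢
    exact ⟨Finset.mem_univ _, by simp⟩
  · rintro ⟨r, i⟩ hy
    rw [Finset.mem_sigma] at hy ⊢
    exact ⟨Finset.mem_univ _, Finset.mem_insert_self _ _⟩
  · rintro ⟨t, i⟩ hx
    rw [Finset.mem_sigma] at hx
    exact Sigma.ext (Finset.insert_erase hx.2) HEq.rfl
  · rintro ⟨r, i⟩ hy
    rw [Finset.mem_sigma] at hy
    have hi : i ∉ r := by simpa using hy.2
    exact Sigma.ext (Finset.erase_insert hi) HEq.rfl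
  · rintro ⟨t, i⟩ hx
    rw [Finset.mem_sigma] at hx
    show F t i = F (insert i (t.erase i)) i
    rw [Finset.insert_erase hx.2]

lemma w1_add_v (v w : Fin m → ℝ) (g : Finset (Fin m) → ℝ) (t : Finset (Fin m)) :
    w1 (fun x => v x + w x) g t = w1 v g t + w1 w g t := by
  unfold w1
  rw [← Finset.sum_add_distrib]
  exact Finset.sum_congr rfl fun i _ => by ring

lemma w1_sum_v {ι : Type*} (s : Finset ι) (c : ι → ℝ) (f : ι → Fin m → ℝ)
    (g : Finset (Fin m) → ℝ) (t : Finset (Fin m)) :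
    w1 (fun x => ∑ i ∈ s, c i * f i x) g t = ∑ i ∈ s, c i * w1 (f i) g t := by
  unfold w1
  have h1 : ∀ j ∈ t, shuffleSign {j} (t.erase j) * (∑ i ∈ s, c i * f i j) * g (t.erase j)
      = ∑ i ∈ s, c i * (shuffleSign {j} (t.erase j) * f i j * g (t.erase j)) := by
    intro j _
    rw [Finset.mul_sum, Finset.sum_mul]
    exact Finset.sum_congr rfl fun i _ => by ring
  rw [Finset.sum_congr rfl h1, Finset.sum_comm]
  exact Finset.sum_congr rfl fun i _ => (Finset.mul_sum _ _ _).symm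

lemma w1_add_g (v : Fin m → ℝ) (g h : Finset (Fin m) → ℝ) (t : Finset (Fin m)) :
    w1 v (fun s => g s + h s) t = w1 v g t + w1 v h t := by
  unfold w1
  rw [← Finset.sum_add_distrib]
  exact Finset.sum_congr rfl fun i _ => by ring

lemma w1_zero_g (v : Fin m → ℝ) (t : Finset (Fin m)) :
    w1 v (fun _ => (0:ℝ)) t = 0 := by
  unfold w1
  exact Finset.sum_eq_zero fun i _ => by ring

lemma ss_single_add {i j : Fin m} (h : i ≠ j) :
    shuffleSign {i} {j} + shuffleSign {j} {i} = 0 := by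
  rw [ss_single, ss_single]
  rcases lt_trichotomy i j with h1 | h1 | h1
  · simp [h1, not_lt.mpr h1.le]
  · exact absurd h1 h
  · simp [h1, not_lt.mpr h1.le]

lemma w1_w1_self (v : Fin m → ℝ) (g : Finset (Fin m) → ℝ) (t : Finset (Fin m)) :
    w1 v (w1 v g) t = 0 := by
  have key : ∀ i ∈ t, ∀ j ∈ t.erase i,
      shuffleSign {i} (t.erase i) * v i *
        (shuffleSign {j} ((t.erase i).erase j) * v j * g ((t.erase i).erase j))
      + shuffleSign {j} (t.erase j) * v j *
        (shuffleSign {i} ((t.erase j).erase i) * v i * g ((t.erase j).erase i)) = 0 := by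
    intro i hi j hj
    obtain ⟨hij, hjt⟩ := Finset.mem_erase.mp hj
    have hji : j ≠ i := hij
    have hir : i ∉ (t.erase i).erase j := fun h => (Finset.mem_erase.mp ((Finset.mem_erase.mp h).2)).1 rfl
    have hjr : j ∉ (t.erase i).erase j := fun h => (Finset.mem_erase.mp h).1 rfl
    have e1 : t.erase i = insert j ((t.erase i).erase j) :=
      (Finset.insert_erase hj).symm
    have e2 : t.erase j = insert i ((t.erase j).erase i) :=
      (Finset.insert_erase (Finset.mem_erase.mpr ⟨fun h => hij h.symm, hi⟩)).symm
    have e3 : (t.erase j).erase i = (t.erase i).erase j := Finset.erase_right_comm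
    rw [e1, e2, e3, ss_insert_right _ hjr, ss_insert_right _ hir,
      Finset.erase_insert hjr, Finset.erase_insert hir]
    have hss := ss_single_add (i := i) (j := j) (fun h => hij h.symm)
    set r := (t.erase i).erase j
    linear_combination (shuffleSign {i} r * shuffleSign {j} r * v i * v j * g r) * hss
  have flip : ∑ i ∈ t, ∑ j ∈ t.erase i,
        shuffleSign {i} (t.erase i) * v i *
          (shuffleSign {j} ((t.erase i).erase j) * v j * g ((t.erase i).erase j))
      = ∑ j ∈ t, ∑ i ∈ t.erase j,
        shuffleSign {i} (t.erase i) * v i *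
          (shuffleSign {j} ((t.erase i).erase j) * v j * g ((t.erase i).erase j)) :=
    Finset.sum_comm' (by
      intro x y
      constructor
      · rintro ⟨hx, hy⟩
        exact ⟨Finset.mem_erase.mpr ⟨fun h => (Finset.mem_erase.mp hy).1 h.symm, hx⟩,
          (Finset.mem_erase.mp hy).2⟩
      · rintro ⟨hx, hy⟩
        exact ⟨(Finset.mem_erase.mp hx).2,
          Finset.mem_erase.mpr ⟨fun h => (Finset.mem_erase.mp hx).1 h.symm, hy⟩⟩)
  have hzero : (2:ℝ) * ∑ i ∈ t, ∑ j ∈ t.erase i,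
      shuffleSign {i} (t.erase i) * v i *
        (shuffleSign {j} ((t.erase i).erase j) * v j * g ((t.erase i).erase j)) = 0 := by
    rw [two_mul]
    nth_rewrite 2 [flip]
    rw [← Finset.sum_add_distrib]
    refine Finset.sum_eq_zero fun i hi => ?_
    rw [← Finset.sum_add_distrib]
    refine Finset.sum_eq_zero fun j hj => ?_
    have := key i hi j hj
    linarith [this]
  have expand : w1 v (w1 v g) t = ∑ i ∈ t, ∑ j ∈ t.erase i,
      shuffleSign {i} (t.erase i) * v i *
        (shuffleSign {j} ((t.erase i).erase j) * v j * g ((t.erase i).erase j)) := by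
    unfold w1
    refine Finset.sum_congr rfl fun i _ => ?_
    rw [Finset.mul_sum]
  rw [expand]
  linarith [hzero]

lemma w1_anticomm (v w : Fin m → ℝ) (g : Finset (Fin m) → ℝ) (t : Finset (Fin m)) :
    w1 v (w1 w g) t = - w1 w (w1 v g) t := by
  have hX : w1 (fun x => v x + w x) g = fun s => w1 v g s + w1 w g s :=
    funext fun s => w1_add_v v w g s
  have h := w1_w1_self (fun x => v x + w x) g t
  rw [hX, w1_add_v v w _ t, w1_add_g, w1_add_g] at h
  have h1 := w1_w1_self v g t
  have h2 := w1_w1_self w g t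
  linarith

lemma clifford (v w : Fin m → ℝ) (g : Finset (Fin m) → ℝ) (t : Finset (Fin m)) :
    c1 v (w1 w g) t + w1 w (c1 v g) t = dotv v w * g t := by
  have e1 : c1 v (w1 w g) t = (∑ j ∈ tᶜ, v j * w j * g t)
      + ∑ j ∈ tᶜ, ∑ i ∈ t, shuffleSign {j} t * v j *
          (shuffleSign {i} (insert j (t.erase i)) * w i * g (insert j (t.erase i))) := by
    unfold c1
    have inner1 : ∀ j ∈ tᶜ, shuffleSign {j} t * v j * w1 w g (insert j t)
        = v j * w j * g t + ∑ i ∈ t, shuffleSign {j} t * v j *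
            (shuffleSign {i} (insert j (t.erase i)) * w i * g (insert j (t.erase i))) := by
      intro j hj
      have hjt : j ∉ t := Finset.mem_compl.mp hj
      unfold w1
      rw [Finset.sum_insert hjt, Finset.erase_insert hjt, mul_add, Finset.mul_sum]
      have hfix : ∀ i ∈ t, shuffleSign {j} t * v j *
            (shuffleSign {i} ((insert j t).erase i) * w i * g ((insert j t).erase i))
          = shuffleSign {j} t * v j *
            (shuffleSign {i} (insert j (t.erase i)) * w i * g (insert j (t.erase i))) := by
        intro i hi
        have hji : j ≠ i := fun h => hjt (h ▸ hi)
        rw [Finset.erase_insert_of_ne hji]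
      rw [Finset.sum_congr rfl hfix]
      have := ss_sq {j} t
      congr 1
      linear_combination (v j * w j * g t) * this
    rw [Finset.sum_congr rfl inner1, Finset.sum_add_distrib]
  have e2 : w1 w (c1 v g) t = (∑ i ∈ t, v i * w i * g t)
      + ∑ i ∈ t, ∑ j ∈ tᶜ, shuffleSign {i} (t.erase i) * w i *
          (shuffleSign {j} (t.erase i) * v j * g (insert j (t.erase i))) := by
    unfold w1
    have inner2 : ∀ i ∈ t, shuffleSign {i} (t.erase i) * w i * c1 v g (t.erase i)
        = v i * w i * g t + ∑ j ∈ tᶜ, shuffleSign {i} (t.erase i) * w i *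
            (shuffleSign {j} (t.erase i) * v j * g (insert j (t.erase i))) := by
      intro i hi
      have hic : i ∉ tᶜ := by simp [hi]
      unfold c1
      rw [Finset.compl_erase, Finset.sum_insert hic, Finset.insert_erase hi, mul_add,
        Finset.mul_sum]
      have := ss_sq {i} (t.erase i)
      congr 1
      linear_combination (v i * w i * g t) * this
    rw [Finset.sum_congr rfl inner2, Finset.sum_add_distrib]
  have comm : ∑ i ∈ t, ∑ j ∈ tᶜ, shuffleSign {i} (t.erase i) * w i *
        (shuffleSign {j} (t.erase i) * v j * g (insert j (t.erase i)))
      = ∑ j ∈ tᶜ, ∑ i ∈ t, shuffleSign {i} (t.erase i) * w i *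
        (shuffleSign {j} (t.erase i) * v j * g (insert j (t.erase i))) := Finset.sum_comm
  have cross : (∑ j ∈ tᶜ, ∑ i ∈ t, shuffleSign {j} t * v j *
        (shuffleSign {i} (insert j (t.erase i)) * w i * g (insert j (t.erase i))))
      + ∑ j ∈ tᶜ, ∑ i ∈ t, shuffleSign {i} (t.erase i) * w i *
        (shuffleSign {j} (t.erase i) * v j * g (insert j (t.erase i))) = 0 := by
    rw [← Finset.sum_add_distrib]
    refine Finset.sum_eq_zero fun j hj => ?_
    rw [← Finset.sum_add_distrib]
    refine Finset.sum_eq_zero fun i hi => ?_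
    have hjt : j ∉ t := Finset.mem_compl.mp hj
    have hij : i ≠ j := fun h => hjt (h ▸ hi)
    have hit : i ∉ t.erase i := Finset.notMem_erase i t
    have hjr : j ∉ t.erase i := fun h => hjt (Finset.mem_of_mem_erase h)
    have r1 : shuffleSign {j} t = shuffleSign {j} {i} * shuffleSign {j} (t.erase i) := by
      nth_rewrite 1 [← Finset.insert_erase hi]
      exact ss_insert_right _ hit
    have r2 : shuffleSign {i} (insert j (t.erase i))
        = shuffleSign {i} {j} * shuffleSign {i} (t.erase i) := ss_insert_right _ hjr
    have hsm := ss_single_mul hij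
    rw [r1, r2]
    linear_combination (shuffleSign {j} (t.erase i) * shuffleSign {i} (t.erase i)
      * v j * w i * g (insert j (t.erase i))) * hsm
  have diag : (∑ j ∈ tᶜ, v j * w j * g t) + (∑ i ∈ t, v i * w i * g t)
      = dotv v w * g t := by
    rw [add_comm, Finset.sum_add_sum_compl]
    unfold dotv
    rw [Finset.sum_mul]
  rw [e1, e2, comm]
  linarith [cross, diag]

lemma dotp_comm (f g : Finset (Fin m) → ℝ) : dotp f g = dotp g f :=
  Finset.sum_congr rfl fun t _ => mul_comm _ _

lemma dotp_self (f : Finset (Fin m) → ℝ) : dotp f f = Nsq f :=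
  Finset.sum_congr rfl fun t _ => (sq (f t)).symm ▸ (pow_two (f t)).symm

lemma Nsq_nonneg (f : Finset (Fin m) → ℝ) : 0 ≤ Nsq f :=
  Finset.sum_nonneg fun t _ => sq_nonneg (f t)

lemma dotv_nonneg (v : Fin m → ℝ) : 0 ≤ dotv v v :=
  Finset.sum_nonneg fun i _ => mul_self_nonneg (v i)

lemma adj (v : Fin m → ℝ) (g h : Finset (Fin m) → ℝ) :
    dotp (w1 v g) h = dotp g (c1 v h) := by
  unfold dotp
  have e1 : ∀ t : Finset (Fin m), w1 v g t * h t
      = ∑ i ∈ t, shuffleSign {i} (t.erase i) * v i * g (t.erase i) * h t := by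
    intro t
    unfold w1
    rw [Finset.sum_mul]
  rw [Finset.sum_congr rfl fun t _ => e1 t,
    sum_univ_sum_mem (fun t i => shuffleSign {i} (t.erase i) * v i * g (t.erase i) * h t)]
  refine Finset.sum_congr rfl fun r _ => ?_
  unfold c1
  rw [Finset.mul_sum]
  refine Finset.sum_congr rfl fun i hi => ?_
  have hir : i ∉ r := Finset.mem_compl.mp hi
  rw [Finset.erase_insert hir]
  ring

lemma norm_identity (v : Fin m → ℝ) (g : Finset (Fin m) → ℝ) :
    Nsq (w1 v g) + Nsq (c1 v g) = dotv v v * Nsq g := by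
  have h1 : dotp (w1 v g) (w1 v g) = dotp g (c1 v (w1 v g)) := adj v g (w1 v g)
  have h3 : dotp g (c1 v (w1 v g)) = dotv v v * Nsq g - dotp g (w1 v (c1 v g)) := by
    unfold dotp Nsq
    rw [Finset.mul_sum, ← Finset.sum_sub_distrib]
    refine Finset.sum_congr rfl fun t _ => ?_
    have h2 := clifford v v g t
    linear_combination g t * h2
  have h4 : dotp g (w1 v (c1 v g)) = dotp (c1 v g) (c1 v g) := by
    rw [dotp_comm]
    exact adj v (c1 v g) g
  rw [← dotp_self, ← dotp_self, h1, h3, h4]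
  ring

lemma w1_bound (v : Fin m → ℝ) (g : Finset (Fin m) → ℝ) :
    Nsq (w1 v g) ≤ dotv v v * Nsq g := by
  have := norm_identity v g
  have := Nsq_nonneg (c1 v g)
  linarith

lemma W_w1 (v : Fin m → ℝ) (f g : Finset (Fin m) → ℝ) :
    W (w1 v f) g = w1 v (W f g) := by
  funext t
  show ∑ s ∈ t.powerset, shuffleSign s (t \ s) * w1 v f s * g (t \ s) = _
  have L : ∑ s ∈ t.powerset, shuffleSign s (t \ s) * w1 v f s * g (t \ s)
      = ∑ s ∈ t.powerset, ∑ i ∈ s, shuffleSign s (t \ s) *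
          (shuffleSign {i} (s.erase i) * v i * f (s.erase i)) * g (t \ s) := by
    refine Finset.sum_congr rfl fun s _ => ?_
    unfold w1
    rw [Finset.mul_sum, Finset.sum_mul]
  rw [L, sum_powerset_sum_mem t (fun s i => shuffleSign s (t \ s) *
      (shuffleSign {i} (s.erase i) * v i * f (s.erase i)) * g (t \ s))]
  unfold w1 W
  refine Finset.sum_congr rfl fun i hi => ?_
  rw [Finset.mul_sum]
  refine Finset.sum_congr rfl fun s hs => ?_
  have hsub : s ⊆ t.erase i := Finset.mem_powerset.mp hs
  have his : i ∉ s := fun h => (Finset.mem_erase.mp (hsub h)).1 rfl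
  have hsd : t \ insert i s = t.erase i \ s := by
    ext x
    simp only [Finset.mem_sdiff, Finset.mem_insert, Finset.mem_erase]
    tauto
  have hu : shuffleSign {i} (t.erase i)
      = shuffleSign {i} s * shuffleSign {i} (t.erase i \ s) := by
    nth_rewrite 1 [← Finset.union_sdiff_of_subset hsub]
    exact ss_union_right _ _ _ Finset.disjoint_sdiff
  rw [Finset.erase_insert his, hsd, ss_insert_left his, hu]
  ring

def sRaw (k : ℕ) (u : Fin k → (Fin m → ℝ)) : Finset (Fin m) → ℝ := ext (wedgeFamily k u)

lemma ext_cast {k l : ℕ} (h : k = l) (a : MultiVec m k) :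
    ext (MultiVec.cast h a) = ext a := by subst h; rfl

lemma sRaw_succ (k : ℕ) (u : Fin (k+1) → (Fin m → ℝ)) :
    sRaw (k+1) u = w1 (u 0) (sRaw k (fun i => u i.succ)) := by
  show ext (wedgeFamily (k+1) u) = _
  rw [show wedgeFamily (k+1) u = MultiVec.cast (Nat.add_comm 1 k)
      (wedge (vec1 (u 0)) (wedgeFamily k (fun i => u i.succ))) from rfl,
    ext_cast, ext_wedge, W_single]
  rfl

lemma sRaw_zero (u : Fin 0 → (Fin m → ℝ)) (t : Finset (Fin m)) :
    sRaw 0 u t = if t = ∅ then 1 else 0 := by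
  unfold sRaw ext
  by_cases h : t = ∅
  · subst h
    simp [wedgeFamily]
  · rw [dif_neg (by simpa [Finset.card_eq_zero] using h), if_neg h]

lemma W_sRaw_zero (u : Fin 0 → (Fin m → ℝ)) (g : Finset (Fin m) → ℝ) :
    W (sRaw 0 u) g = g := by
  funext t
  unfold W
  rw [Finset.sum_eq_single_of_mem ∅ (Finset.empty_mem_powerset t)
    (fun s _ hne => by rw [sRaw_zero _ s, if_neg hne]; ring)]
  rw [sRaw_zero _ ∅, if_pos rfl, ss_empty_left, Finset.sdiff_empty]
  ring

lemma Nsq_sRaw_zero (u : Fin 0 → (Fin m → ℝ)) : Nsq (sRaw 0 u) = 1 := by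
  unfold Nsq
  rw [Finset.sum_eq_single_of_mem ∅ (Finset.mem_univ ∅)
    (fun s _ hne => by rw [sRaw_zero _ s, if_neg hne]; ring)]
  rw [sRaw_zero _ ∅, if_pos rfl]
  norm_num

lemma w1_mem_zero (k : ℕ) : ∀ (u : Fin k → (Fin m → ℝ)) (j : Fin k) (t : Finset (Fin m)),
    w1 (u j) (sRaw k u) t = 0 := by
  induction k with
  | zero => intro u j t; exact j.elim0
  | succ k ih =>
    intro u j t
    rw [sRaw_succ]
    refine Fin.cases ?_ ?_ j
    · exact w1_w1_self (u 0) _ t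
    · intro i
      rw [w1_anticomm]
      have hfz : w1 (u i.succ) (sRaw k (fun i => u i.succ)) = fun _ => (0:ℝ) :=
        funext fun s => ih (fun i => u i.succ) i s
      rw [hfz, w1_zero_g]
      ring

lemma c1_sRaw (k : ℕ) : ∀ (u : Fin k → (Fin m → ℝ)) (v : Fin m → ℝ),
    (∀ i, dotv v (u i) = 0) → ∀ t, c1 v (sRaw k u) t = 0 := by
  induction k with
  | zero =>
    intro u v _ t
    unfold c1
    refine Finset.sum_eq_zero fun i _ => ?_
    rw [sRaw_zero _ _, if_neg (Finset.insert_ne_empty i t)]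
    ring
  | succ k ih =>
    intro u v hv t
    rw [sRaw_succ]
    have h := clifford v (u 0) (sRaw k (fun i => u i.succ)) t
    have hfz : c1 v (sRaw k fun i => u i.succ) = fun _ => (0:ℝ) :=
      funext fun s => ih _ v (fun i => hv i.succ) s
    rw [hfz, w1_zero_g, hv 0] at h
    linarith

lemma ortho_decomp (k : ℕ) (u : Fin k → (Fin m → ℝ)) (v : Fin m → ℝ) :
    ∃ (w : Fin m → ℝ) (c : Fin k → ℝ),
      (∀ i, dotv w (u i) = 0) ∧ ∀ x, v x = w x + ∑ i, c i * u i x := by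
  classical
  let e : (Fin m → ℝ) ≃ EuclideanSpace ℝ (Fin m) := (WithLp.equiv 2 (Fin m → ℝ)).symm
  let L := WithLp.linearEquiv 2 ℝ (Fin m → ℝ)
  let K : Submodule ℝ (EuclideanSpace ℝ (Fin m)) :=
    Submodule.span ℝ (Set.range fun i => e (u i))
  obtain ⟨y, hy, z, hz, hvyz⟩ := K.exists_add_mem_mem_orthogonal (e v)
  obtain ⟨c, hc⟩ := (Submodule.mem_span_range_iff_exists_fun ℝ).mp hy
  refine ⟨L z, c, ?_, ?_⟩
  · intro i
    have hi : e (u i) ∈ K := Submodule.subset_span (Set.mem_range_self i)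
    have h0 := (Submodule.mem_orthogonal K z).mp hz (e (u i)) hi
    rw [PiLp.inner_apply] at h0
    unfold dotv
    rw [← h0]
    refine Finset.sum_congr rfl fun x _ => ?_
    show L z x * u i x = _
    simp [L, e, WithLp.linearEquiv, mul_comm]
  · intro x
    have h1 : v = L y + L z := by
      have := congrArg L hvyz
      rw [map_add] at this
      simpa [L, e, WithLp.linearEquiv] using this
    have h2 : L y = ∑ i, c i • u i := by
      have := congrArg L hc
      rw [map_sum] at this
      rw [← this]
      refine (Finset.sum_congr rfl fun i _ => ?_).symm
      rw [map_smul]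
      simp [L, e, WithLp.linearEquiv]
    rw [h1, h2]
    simp [Finset.sum_apply, mul_comm]
    ring

lemma Nsq_zero_fun : Nsq (fun _ : Finset (Fin m) => (0:ℝ)) = 0 := by
  unfold Nsq
  simp

lemma mainIneq (k : ℕ) : ∀ (u : Fin k → (Fin m → ℝ)) (g : Finset (Fin m) → ℝ),
    Nsq (W (sRaw k u) g) ≤ Nsq (sRaw k u) * Nsq g := by
  induction k with
  | zero => intro u g; rw [W_sRaw_zero, Nsq_sRaw_zero, one_mul]
  | succ k ih =>
    intro u g
    set u' : Fin k → (Fin m → ℝ) := fun i => u i.succ with hu'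
    set S := sRaw k u' with hS
    obtain ⟨w, c, hw, hdec⟩ := ortho_decomp k u' (u 0)
    have hv : u 0 = fun x => w x + ∑ i, c i * u' i x := funext hdec
    have hsplit : ∀ t, w1 (u 0) S t = w1 w S t := by
      intro t
      rw [hv, w1_add_v w (fun x => ∑ i, c i * u' i x) S t]
      have hz : w1 (fun x => ∑ i ∈ Finset.univ, c i * u' i x) S t = 0 := by
        rw [w1_sum_v Finset.univ c u' S t]
        exact Finset.sum_eq_zero fun i _ => by rw [w1_mem_zero k u' i t]; ring
      rw [show (fun x => ∑ i, c i * u' i x) = fun x => ∑ i ∈ Finset.univ, c i * u' i x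
        from rfl] at *
      linarith
    have hS1 : sRaw (k+1) u = w1 w S := by
      rw [sRaw_succ]
      exact funext hsplit
    have hc1 : c1 w S = fun _ => (0:ℝ) := funext fun t => c1_sRaw k u' w hw t
    have hnorm : Nsq (sRaw (k+1) u) = dotv w w * Nsq S := by
      rw [hS1]
      have hni := norm_identity w S
      rw [hc1, Nsq_zero_fun] at hni
      linarith
    calc Nsq (W (sRaw (k+1) u) g) = Nsq (w1 w (W S g)) := by rw [hS1, W_w1]
      _ ≤ dotv w w * Nsq (W S g) := w1_bound w _
      _ ≤ dotv w w * (Nsq S * Nsq g) :=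
          mul_le_mul_of_nonneg_left (ih u' g) (dotv_nonneg w)
      _ = Nsq (sRaw (k+1) u) * Nsq g := by rw [hnorm]; ring

lemma Nsq_ext {k : ℕ} (a : MultiVec m k) : Nsq (ext a) = ∑ t, (a t) ^ 2 := by
  classical
  unfold Nsq
  have h1 : ∑ s : Finset (Fin m), ext a s ^ 2
      = ∑ s ∈ Finset.univ.filter (fun s : Finset (Fin m) => s.card = k), ext a s ^ 2 :=
    (Finset.sum_filter_of_ne fun s _ hne => by
      by_contra h
      exact hne (by rw [ext_eq_zero a h]; norm_num)).symm
  rw [h1, Finset.sum_subtype (p := fun s : Finset (Fin m) => s.card = k) _ (fun s => by simp) (fun s => ext a s ^ 2)]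
  exact Finset.sum_congr rfl fun t _ => by rw [ext_eq a t.2]

lemma mnorm_eq {k : ℕ} (a : MultiVec m k) : mnorm a = Real.sqrt (Nsq (ext a)) := by
  rw [mnorm, Nsq_ext]

lemma W_ext_comm {k l : ℕ} (a : MultiVec m k) (b : MultiVec m l) (t : Finset (Fin m)) :
    W (ext a) (ext b) t = (-1:ℝ)^(k*l) * W (ext b) (ext a) t := by
  unfold W
  rw [Finset.mul_sum]
  refine Finset.sum_nbij' (fun s => t \ s) (fun s => t \ s) ?_ ?_ ?_ ?_ ?_
  · intro s _
    exact Finset.mem_powerset.mpr (Finset.sdiff_subset)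
  · intro s _
    exact Finset.mem_powerset.mpr (Finset.sdiff_subset)
  · intro s hs
    exact Finset.sdiff_sdiff_eq_self (Finset.mem_powerset.mp hs)
  · intro s hs
    exact Finset.sdiff_sdiff_eq_self (Finset.mem_powerset.mp hs)
  · intro s hs
    rw [Finset.sdiff_sdiff_eq_self (Finset.mem_powerset.mp hs)]
    by_cases ha : s.card = k
    · by_cases hb : (t \ s).card = l
      · have hcomm := ss_comm s (t \ s) Finset.disjoint_sdiff
        rw [ha, hb] at hcomm
        have hsq := ss_sq (t \ s) s
        have hkey : shuffleSign s (t \ s) = (-1:ℝ)^(k*l) * shuffleSign (t \ s) s := by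
          linear_combination (shuffleSign (t \ s) s) * hcomm
            - (shuffleSign s (t \ s)) * hsq
        rw [hkey]
        ring
      · rw [ext_eq_zero b hb]
        ring
    · rw [ext_eq_zero a ha]
      ring

lemma Nsq_W_comm {k l : ℕ} (a : MultiVec m k) (b : MultiVec m l) :
    Nsq (W (ext a) (ext b)) = Nsq (W (ext b) (ext a)) := by
  unfold Nsq
  refine Finset.sum_congr rfl fun t _ => ?_
  rw [W_ext_comm a b t, mul_pow]
  have h2 : ((-1:ℝ)^(k*l))^2 = 1 := by
    rw [← pow_mul, mul_comm (k*l) 2, pow_mul]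
    norm_num
  rw [h2, one_mul]

lemma main_simple {k l : ℕ} (lam : MultiVec m k) (eta : MultiVec m l) (h : IsSimple lam) :
    mnorm (wedge lam eta) ≤ mnorm lam * mnorm eta := by
  obtain ⟨u, rfl⟩ := h
  have h1 : mnorm (wedge (wedgeFamily k u) eta)
      = Real.sqrt (Nsq (W (sRaw k u) (ext eta))) := by
    rw [mnorm_eq, ext_wedge]
    rfl
  rw [h1]
  calc Real.sqrt (Nsq (W (sRaw k u) (ext eta)))
      ≤ Real.sqrt (Nsq (sRaw k u) * Nsq (ext eta)) :=
        Real.sqrt_le_sqrt (mainIneq k u (ext eta))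
    _ = Real.sqrt (Nsq (sRaw k u)) * Real.sqrt (Nsq (ext eta)) :=
        Real.sqrt_mul (Nsq_nonneg _) _
    _ = mnorm (wedgeFamily k u) * mnorm eta := by rw [mnorm_eq, mnorm_eq]; rfl

end Aux
end

/-- If `λ ∈ Λ_k(ℝ^m)`, `η ∈ Λ_ℓ(ℝ^m)` and at least one of them is a simple
(decomposable) multivector, then `|λ ∧ η|_{k+ℓ} ≤ |λ|_k |η|_ℓ`. -/
theorem stmt_9 (m k l : ℕ) (hkl : k + l ≤ m)
    (lam : MultiVec m k) (eta : MultiVec m l)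
    (hs : IsSimple lam ∨ IsSimple eta) :
    mnorm (wedge lam eta) ≤ mnorm lam * mnorm eta := by
  rcases hs with h | h
  · exact Aux.main_simple lam eta h
  · obtain ⟨u, rfl⟩ := h
    have h1 : mnorm (wedge lam (wedgeFamily l u))
        = Real.sqrt (Aux.Nsq (Aux.W (Aux.sRaw l u) (Aux.ext lam))) := by
      rw [Aux.mnorm_eq, Aux.ext_wedge, Aux.Nsq_W_comm]
      rfl
    rw [h1]
    calc Real.sqrt (Aux.Nsq (Aux.W (Aux.sRaw l u) (Aux.ext lam)))
        ≤ Real.sqrt (Aux.Nsq (Aux.sRaw l u) * Aux.Nsq (Aux.ext lam)) :=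
          Real.sqrt_le_sqrt (Aux.mainIneq l u (Aux.ext lam))
      _ = Real.sqrt (Aux.Nsq (Aux.sRaw l u)) * Real.sqrt (Aux.Nsq (Aux.ext lam)) :=
          Real.sqrt_mul (Aux.Nsq_nonneg _) _
      _ = mnorm lam * mnorm (wedgeFamily l u) := by
          rw [Aux.mnorm_eq, Aux.mnorm_eq]
          · rw [mul_comm]
            rfl
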